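/- arXiv:2206.05525 — 3 statements merged into one kernel-verified Lean document; each statement's English description precedes it below -/
import Mathlib

section
/- Let K be a field of characteristic 0 and let φ ∈ G_∞(n,K) be a system with linear part φ₁ = id (the identity matrix). If φ^s = id for some integer s ≥ 1, then φ = id. -/
noncomputable section

open MvPowerSeries

/-- A system of `n` formal power series in the `n` variables `x₁, …, xₙ` over `K`. -/
abbrev Sys (n : ℕ) (K : Type) [Field K] := Fin n → MvPowerSeries (Fin n) K

variable {n : ℕ} {K : Type} [Field K]

/-- The degree-`k` homogeneous component `φ_k` of a system `φ`. -/
def homC (k : ℕ) (φ : Sys n K) : Sys n K :=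
  fun i => (fun e => if (e.sum fun _ x => x) = k then MvPowerSeries.coeff (R := K) e (φ i) else 0 :
    MvPowerSeries (Fin n) K)

/-- The truncation `φ_{≤ m}` of a system `φ` to total degrees `≤ m`. -/
def truncLE (m : ℕ) (φ : Sys n K) : Sys n K :=
  fun i => (fun e => if (e.sum fun _ x => x) ≤ m then MvPowerSeries.coeff (R := K) e (φ i) else 0 :
    MvPowerSeries (Fin n) K)

/-- Composition (substitution) `φ ∘ ψ` of systems of formal power series.  The coefficient of a
monomial `e` in `φ ∘ ψ` is computed by substituting `ψ` into a sufficiently large polynomial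
truncation of `φ`; this agrees with the usual substitution whenever `ψ` has zero constant term. -/
def comp (φ ψ : Sys n K) : Sys n K :=
  fun i => (fun e =>
    MvPowerSeries.coeff (R := K) e
      (MvPolynomial.eval₂ (MvPowerSeries.C (σ := Fin n) (R := K)) ψ
        (MvPowerSeries.trunc K
          (Finsupp.equivFunOnFinite.symm fun _ => (e.sum fun _ x => x) + 1) (φ i))) :
    MvPowerSeries (Fin n) K)

/-- The identity system `id = (x₁, …, xₙ)`. -/
def idSys : Sys n K := fun i => MvPowerSeries.X i

/-- The `m`-fold composition `φ^m` of a system with itself (`φ^0 = id`). -/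
def iterComp (φ : Sys n K) : ℕ → Sys n K
  | 0 => idSys
  | m + 1 => comp (iterComp φ m) φ

/-- The Jacobian matrix of a system, i.e. its linear part viewed as a matrix. -/
def jac (φ : Sys n K) : Matrix (Fin n) (Fin n) K :=
  fun i j => MvPowerSeries.coeff (R := K) (Finsupp.single j 1) (φ i)

/-- The linear system of power series attached to a matrix `A`. -/
def ofMatrix (A : Matrix (Fin n) (Fin n) K) : Sys n K :=
  fun i => ∑ j, MvPowerSeries.C (σ := Fin n) (R := K) (A i j) * MvPowerSeries.X j

/-- total degree of an exponent -/
def dg (e : Fin n →₀ ℕ) : ℕ := e.sum fun _ x => x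

lemma dg_eq_sum (e : Fin n →₀ ℕ) : dg e = ∑ j, e j :=
  Finsupp.sum_fintype _ _ (fun _ => rfl)

lemma dg_add (u v : Fin n →₀ ℕ) : dg (u + v) = dg u + dg v := by
  simp [dg_eq_sum, Finset.sum_add_distrib]

lemma dg_single (j : Fin n) : dg (Finsupp.single j 1) = 1 :=
  Finsupp.sum_single_index rfl

lemma le_dg (e : Fin n →₀ ℕ) (j : Fin n) : e j ≤ dg e := by
  rw [dg_eq_sum]
  exact Finset.single_le_sum (fun _ _ => Nat.zero_le _) (Finset.mem_univ j)

lemma dg_eq_zero {e : Fin n →₀ ℕ} (h : dg e = 0) : e = 0 := by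
  ext j
  have h2 := le_dg e j
  simp only [Finsupp.coe_zero, Pi.zero_apply]
  omega

/-- `f` and `g` both have order `≥ a` and agree in degrees `< a - 1 + k`. -/
def OG (k a : ℕ) (f g : MvPowerSeries (Fin n) K) : Prop :=
  (∀ e, dg e < a → coeff (R := K) e f = 0) ∧ (∀ e, dg e < a → coeff (R := K) e g = 0) ∧
  (∀ e, dg e < a - 1 + k → coeff (R := K) e f = coeff (R := K) e g)

lemma OG_one (k : ℕ) : OG k 0 (1 : MvPowerSeries (Fin n) K) 1 :=
  ⟨fun _ h => absurd h (Nat.not_lt_zero _), fun _ h => absurd h (Nat.not_lt_zero _),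
   fun _ _ => rfl⟩

lemma OG_mul {k a b : ℕ} {f₁ g₁ f₂ g₂ : MvPowerSeries (Fin n) K}
    (h₁ : OG k a f₁ g₁) (h₂ : OG k b f₂ g₂) : OG k (a + b) (f₁ * f₂) (g₁ * g₂) := by
  obtain ⟨h1, h1', h1''⟩ := h₁
  obtain ⟨h2, h2', h2''⟩ := h₂
  classical
  refine ⟨?_, ?_, ?_⟩ <;> intro e he
  · rw [coeff_mul]
    refine Finset.sum_eq_zero fun p hp => ?_
    have hd : dg p.1 + dg p.2 = dg e := by
      rw [← dg_add, Finset.HasAntidiagonal.mem_antidiagonal.mp hp]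
    rcases (by omega : dg p.1 < a ∨ dg p.2 < b) with h | h
    · rw [h1 _ h, zero_mul]
    · rw [h2 _ h, mul_zero]
  · rw [coeff_mul]
    refine Finset.sum_eq_zero fun p hp => ?_
    have hd : dg p.1 + dg p.2 = dg e := by
      rw [← dg_add, Finset.HasAntidiagonal.mem_antidiagonal.mp hp]
    rcases (by omega : dg p.1 < a ∨ dg p.2 < b) with h | h
    · rw [h1' _ h, zero_mul]
    · rw [h2' _ h, mul_zero]
  · rw [coeff_mul, coeff_mul]
    refine Finset.sum_congr rfl fun p hp => ?_
    have hd : dg p.1 + dg p.2 = dg e := by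
      rw [← dg_add, Finset.HasAntidiagonal.mem_antidiagonal.mp hp]
    by_cases hu : dg p.1 < a - 1 + k
    · rw [h1'' _ hu]
      by_cases hv : dg p.2 < b - 1 + k
      · rw [h2'' _ hv]
      · have h : dg p.1 < a := by omega
        rw [h1' _ h, zero_mul, zero_mul]
    · have h : dg p.2 < b := by omega
      rw [h2 _ h, h2' _ h, mul_zero, mul_zero]

lemma OG_pow {k a : ℕ} {f g : MvPowerSeries (Fin n) K} (h : OG k a f g) :
    ∀ m : ℕ, OG k (a * m) (f ^ m) (g ^ m)
  | 0 => by simpa using OG_one k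
  | m + 1 => by
      have hm : a * (m + 1) = a * m + a := by ring
      rw [pow_succ, pow_succ, hm]
      exact OG_mul (OG_pow h m) h

lemma OG_prod {k : ℕ} {φ : Sys n K} (hφ : ∀ j, OG k 1 (φ j) (MvPowerSeries.X j))
    (d : Fin n →₀ ℕ) :
    OG k (dg d) (∏ j, φ j ^ d j) (∏ j, (MvPowerSeries.X j : MvPowerSeries (Fin n) K) ^ d j) := by
  rw [dg_eq_sum]
  induction (Finset.univ : Finset (Fin n)) using Finset.cons_induction with
  | empty => simpa using OG_one k
  | cons a s ha ih =>
      rw [Finset.prod_cons, Finset.prod_cons, Finset.sum_cons]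
      have hp := OG_pow (hφ a) (d a)
      rw [one_mul] at hp
      exact OG_mul hp ih

lemma prod_X_pow (d : Fin n →₀ ℕ) :
    (∏ j, (MvPowerSeries.X j : MvPowerSeries (Fin n) K) ^ d j) = monomial (R := K) d 1 := by
  simp_rw [X_pow_eq]
  have h : ∀ s : Finset (Fin n),
      (∏ j ∈ s, monomial (R := K) (Finsupp.single j (d j)) (1 : K)) =
        monomial (R := K) (∑ j ∈ s, Finsupp.single j (d j)) 1 := by
    intro s
    induction s using Finset.cons_induction with
    | empty => simp
    | cons a s ha ih =>
        rw [Finset.prod_cons, Finset.sum_cons, ih, monomial_mul_monomial, one_mul]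
  rw [h, Finsupp.univ_sum_single]

lemma coeff_comp_eq (ψ χ : Sys n K) (i : Fin n) (e : Fin n →₀ ℕ) :
    coeff (R := K) e (comp ψ χ i) =
      ∑ d ∈ (trunc K (Finsupp.equivFunOnFinite.symm fun _ => dg e + 1) (ψ i)).support,
        ((trunc K (Finsupp.equivFunOnFinite.symm fun _ => dg e + 1) (ψ i)).coeff d) *
          coeff (R := K) e (∏ j, χ j ^ d j) := by
  rw [MvPowerSeries.coeff_apply (comp ψ χ i) e]
  show MvPowerSeries.coeff (R := K) e (MvPolynomial.eval₂ (MvPowerSeries.C (σ := Fin n) (R := K)) χ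
        (MvPowerSeries.trunc K
          (Finsupp.equivFunOnFinite.symm fun _ => dg e + 1) (ψ i))) = _
  rw [MvPolynomial.eval₂_eq', map_sum]
  simp_rw [coeff_C_mul]

lemma coeff0X (j : Fin n) : coeff (R := K) (0 : Fin n →₀ ℕ) (MvPowerSeries.X j) = 0 := by
  classical
  rw [MvPowerSeries.coeff_X,
    if_neg (fun h => (one_ne_zero (α := ℕ)) (Finsupp.single_eq_zero.mp h.symm))]

lemma OG_of_agree {k : ℕ} (hk : 1 ≤ k) {χ : Sys n K}
    (hχ : ∀ e : Fin n →₀ ℕ, dg e < k → ∀ j, coeff (R := K) e (χ j) = coeff (R := K) e (MvPowerSeries.X j))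
    (j : Fin n) : OG k 1 (χ j) (MvPowerSeries.X j) := by
  refine ⟨?_, ?_, fun u hu => hχ u (by omega) j⟩
  · intro u hu
    have h0 : u = 0 := dg_eq_zero (by omega)
    subst h0
    rw [hχ 0 (by omega) j]
    exact coeff0X j
  · intro u hu
    have h0 : u = 0 := dg_eq_zero (by omega)
    subst h0
    exact coeff0X j

lemma prod_pow_single (χ : Sys n K) (i' : Fin n) :
    (∏ j, χ j ^ (Finsupp.single i' 1) j) = χ i' := by
  classical
  rw [Finset.prod_eq_single i'
      (fun b _ hb => by rw [Finsupp.single_eq_of_ne' (Ne.symm hb), pow_zero])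
      (fun h => absurd (Finset.mem_univ i') h),
    Finsupp.single_eq_same, pow_one]

lemma dg_zero : dg (0 : Fin n →₀ ℕ) = 0 := by simp [dg]

lemma Napp (e : Fin n →₀ ℕ) (j : Fin n) :
    (Finsupp.equivFunOnFinite.symm fun _ : Fin n => dg e + 1) j = dg e + 1 := rfl

lemma coeff_comp_of_agree {k : ℕ} (hk : 2 ≤ k) (χ ψ : Sys n K)
    (hχ : ∀ e : Fin n →₀ ℕ, dg e < k → ∀ j, coeff (R := K) e (χ j) = coeff (R := K) e (MvPowerSeries.X j))
    (hψ : ∀ e : Fin n →₀ ℕ, dg e < k → ∀ j, coeff (R := K) e (ψ j) = coeff (R := K) e (MvPowerSeries.X j))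
    (i : Fin n) (e : Fin n →₀ ℕ) :
    (dg e < k → coeff (R := K) e (comp ψ χ i) = coeff (R := K) e (MvPowerSeries.X i)) ∧
    (dg e = k → coeff (R := K) e (comp ψ χ i) = coeff (R := K) e (ψ i) + coeff (R := K) e (χ i)) := by
  classical
  have hOG : ∀ d : Fin n →₀ ℕ,
      OG k (dg d) (∏ j, χ j ^ d j) (∏ j, (MvPowerSeries.X j : MvPowerSeries (Fin n) K) ^ d j) :=
    OG_prod (fun j => OG_of_agree (by omega) hχ j)
  have hsum := coeff_comp_eq ψ χ i e
  have hmem : ∀ d ∈ (trunc K (Finsupp.equivFunOnFinite.symm fun _ => dg e + 1) (ψ i)).support,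
      (trunc K (Finsupp.equivFunOnFinite.symm fun _ => dg e + 1) (ψ i)).coeff d
        = coeff (R := K) d (ψ i) := by
    intro d hd
    rw [MvPolynomial.mem_support_iff, MvPowerSeries.coeff_trunc] at hd
    rw [MvPowerSeries.coeff_trunc]
    by_cases hdN : d < (Finsupp.equivFunOnFinite.symm fun _ : Fin n => dg e + 1)
    · rw [if_pos hdN]
    · rw [if_neg hdN] at hd ⊢
      exact absurd rfl hd
  constructor
  · -- low degree
    intro he
    rw [hsum]
    have hterm : ∀ d ∈ (trunc K (Finsupp.equivFunOnFinite.symm fun _ => dg e + 1) (ψ i)).support,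
        (trunc K (Finsupp.equivFunOnFinite.symm fun _ => dg e + 1) (ψ i)).coeff d *
            coeff (R := K) e (∏ j, χ j ^ d j)
          = if d = Finsupp.single i 1 then coeff (R := K) e (χ i) else 0 := by
      intro d hd
      rw [hmem d hd]
      by_cases hds : d = Finsupp.single i 1
      · subst hds
        rw [if_pos rfl, prod_pow_single,
          hψ _ (by rw [dg_single]; omega) i, MvPowerSeries.coeff_X, if_pos rfl, one_mul]
      · rw [if_neg hds]
        by_cases hdeg : dg e < dg d
        · rw [(hOG d).1 e hdeg, mul_zero]
        · rw [hψ d (by omega) i, MvPowerSeries.coeff_X, if_neg hds, zero_mul]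
    rw [Finset.sum_congr rfl hterm, Finset.sum_ite_eq']
    by_cases hmemS : Finsupp.single i 1 ∈
        (trunc K (Finsupp.equivFunOnFinite.symm fun _ => dg e + 1) (ψ i)).support
    · rw [if_pos hmemS]
      exact hχ e he i
    · rw [if_neg hmemS]
      rw [MvPolynomial.mem_support_iff, not_not, MvPowerSeries.coeff_trunc] at hmemS
      by_cases hlt : Finsupp.single i 1 < (Finsupp.equivFunOnFinite.symm fun _ : Fin n => dg e + 1)
      · rw [if_pos hlt, hψ _ (by rw [dg_single]; omega) i, MvPowerSeries.coeff_X,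
          if_pos rfl] at hmemS
        exact absurd hmemS one_ne_zero
      · have he0 : dg e = 0 := by
          by_contra h0
          apply hlt
          rw [Finsupp.lt_def]
          constructor
          · intro j
            rw [Napp]
            rcases eq_or_ne j i with h | h
            · subst h; rw [Finsupp.single_eq_same]; omega
            · rw [Finsupp.single_eq_of_ne' (Ne.symm h)]; omega
          · exact ⟨i, by rw [Napp, Finsupp.single_eq_same]; omega⟩
        rw [dg_eq_zero he0]
        exact (coeff0X i).symm
  · -- degree k
    intro hek
    rw [hsum]
    have hne : Finsupp.single i 1 ≠ e := by
      intro h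
      rw [← h, dg_single] at hek
      omega
    have hterm : ∀ d ∈ (trunc K (Finsupp.equivFunOnFinite.symm fun _ => dg e + 1) (ψ i)).support,
        (trunc K (Finsupp.equivFunOnFinite.symm fun _ => dg e + 1) (ψ i)).coeff d *
            coeff (R := K) e (∏ j, χ j ^ d j)
          = (if d = Finsupp.single i 1 then coeff (R := K) e (χ i) else 0)
            + (if d = e then coeff (R := K) e (ψ i) else 0) := by
      intro d hd
      rw [hmem d hd]
      by_cases hds : d = Finsupp.single i 1
      · subst hds
        rw [if_pos rfl, if_neg hne, prod_pow_single,
          hψ _ (by rw [dg_single]; omega) i, MvPowerSeries.coeff_X, if_pos rfl, one_mul, add_zero]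
      · rw [if_neg hds, zero_add]
        by_cases hde : d = e
        · subst hde
          rw [if_pos rfl, (hOG d).2.2 d (by omega), prod_X_pow, coeff_monomial_same, mul_one]
        · rw [if_neg hde]
          rcases lt_trichotomy (dg d) k with h | h | h
          · rw [hψ d (by omega) i, MvPowerSeries.coeff_X, if_neg hds, zero_mul]
          · rw [(hOG d).2.2 e (by omega), prod_X_pow,
              coeff_monomial_ne (Ne.symm hde), mul_zero]
          · rw [(hOG d).1 e (by omega), mul_zero]
    rw [Finset.sum_congr rfl hterm, Finset.sum_add_distrib, Finset.sum_ite_eq',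
      Finset.sum_ite_eq']
    have hlt1 : Finsupp.single i 1 <
        (Finsupp.equivFunOnFinite.symm fun _ : Fin n => dg e + 1) := by
      rw [Finsupp.lt_def]
      constructor
      · intro j
        rw [Napp]
        rcases eq_or_ne j i with h | h
        · subst h; rw [Finsupp.single_eq_same]; omega
        · rw [Finsupp.single_eq_of_ne' (Ne.symm h)]; omega
      · exact ⟨i, by rw [Napp, Finsupp.single_eq_same]; omega⟩
    have hm1 : Finsupp.single i 1 ∈
        (trunc K (Finsupp.equivFunOnFinite.symm fun _ => dg e + 1) (ψ i)).support := by
      rw [MvPolynomial.mem_support_iff, MvPowerSeries.coeff_trunc, if_pos hlt1,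
        hψ _ (by rw [dg_single]; omega) i, MvPowerSeries.coeff_X, if_pos rfl]
      exact one_ne_zero
    rw [if_pos hm1]
    by_cases hme : e ∈
        (trunc K (Finsupp.equivFunOnFinite.symm fun _ => dg e + 1) (ψ i)).support
    · rw [if_pos hme, add_comm]
    · rw [if_neg hme]
      rw [MvPolynomial.mem_support_iff, not_not, MvPowerSeries.coeff_trunc] at hme
      have heN : e < (Finsupp.equivFunOnFinite.symm fun _ : Fin n => dg e + 1) := by
        rw [Finsupp.lt_def]
        constructor
        · intro j
          rw [Napp]
          have := le_dg e j
          omega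
        · exact ⟨i, by rw [Napp]; have := le_dg e i; omega⟩
      rw [if_pos heN] at hme
      rw [hme, zero_add, add_zero]

lemma coeff_homC (k' : ℕ) (φ : Sys n K) (i : Fin n) (e : Fin n →₀ ℕ) :
    coeff (R := K) e (homC k' φ i) = if dg e = k' then coeff (R := K) e (φ i) else 0 := by
  rw [MvPowerSeries.coeff_apply (homC k' φ i) e]
  rfl


/-- If `char K = 0`, `φ ∈ G_∞(n,K)` has linear part the identity and
`φ^s = id` for some `s ≥ 1`, then `φ = id`. -/
theorem periodic_with_identity_linear_part_is_identity
    (n : ℕ) (K : Type) [Field K] [CharZero K] (φ : Sys n K)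
    (hφ0 : homC 0 φ = 0) (hφ1 : homC 1 φ = idSys)
    (s : ℕ) (hs : 1 ≤ s) (hper : iterComp φ s = idSys) :
    φ = idSys := by
  classical
  have h0 : ∀ i : Fin n, coeff (R := K) (0 : Fin n →₀ ℕ) (φ i) = 0 := by
    intro i
    have h := congrArg (coeff (R := K) (0 : Fin n →₀ ℕ)) (congrFun hφ0 i)
    rw [coeff_homC, if_pos dg_zero] at h
    simpa using h
  have h1 : ∀ e : Fin n →₀ ℕ, dg e = 1 → ∀ i,
      coeff (R := K) e (φ i) = coeff (R := K) e (MvPowerSeries.X i) := by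
    intro e he i
    have h := congrArg (coeff (R := K) e) (congrFun hφ1 i)
    rw [coeff_homC, if_pos he] at h
    exact h
  have key : ∀ k : ℕ, ∀ e : Fin n →₀ ℕ, dg e = k → ∀ i,
      coeff (R := K) e (φ i) = coeff (R := K) e (MvPowerSeries.X i) := by
    intro k
    induction k using Nat.strong_induction_on with
    | _ k ih =>
      by_cases hk2 : k < 2
      · intro e he i
        rcases (by omega : k = 0 ∨ k = 1) with h | h
        · subst h
          rw [dg_eq_zero he, h0 i, coeff0X i]
        · exact h1 e (by omega) i
      · have hk : 2 ≤ k := by omega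
        have hlow : ∀ u : Fin n →₀ ℕ, dg u < k → ∀ j,
            coeff (R := K) u (φ j) = coeff (R := K) u (MvPowerSeries.X j) :=
          fun u hu j => ih (dg u) hu u rfl j
        have hiter : ∀ m : ℕ,
            (∀ u : Fin n →₀ ℕ, dg u < k → ∀ i,
              coeff (R := K) u (iterComp φ m i) = coeff (R := K) u (MvPowerSeries.X i)) ∧
            (∀ u : Fin n →₀ ℕ, dg u = k → ∀ i,
              coeff (R := K) u (iterComp φ m i) = (m : K) * coeff (R := K) u (φ i)) := by
          intro m
          induction m with
          | zero =>
            constructor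
            · intro u hu i; rfl
            · intro u hu i
              rw [show iterComp φ 0 i = (MvPowerSeries.X i : MvPowerSeries (Fin n) K) from rfl,
                MvPowerSeries.coeff_X,
                if_neg (fun hc => by rw [hc, dg_single] at hu; omega)]
              simp
          | succ m ihm =>
            constructor
            · intro u hu i
              exact (coeff_comp_of_agree hk φ (iterComp φ m) hlow
                (fun v hv j => ihm.1 v hv j) i u).1 hu
            · intro u hu i
              have h2 := (coeff_comp_of_agree hk φ (iterComp φ m) hlow
                (fun v hv j => ihm.1 v hv j) i u).2 hu
              have h3 := ihm.2 u hu i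
              rw [show iterComp φ (m + 1) i = comp (iterComp φ m) φ i from rfl, h2, h3]
              push_cast
              ring
        intro e he i
        have h4 := (hiter s).2 e he i
        rw [hper] at h4
        have h5 : coeff (R := K) e (MvPowerSeries.X i) = 0 := by
          rw [MvPowerSeries.coeff_X, if_neg (fun hc => by rw [hc, dg_single] at he; omega)]
        rw [show idSys i = (MvPowerSeries.X i : MvPowerSeries (Fin n) K) from rfl, h5] at h4
        have hs0 : (s : K) ≠ 0 := Nat.cast_ne_zero.mpr (by omega)
        have h6 : coeff (R := K) e (φ i) = 0 := (mul_eq_zero.mp h4.symm).resolve_left hs0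
        rw [h6, h5]
  funext i
  exact MvPowerSeries.ext fun e => key (dg e) e rfl i
end
end

section
/- Every periodic element of G_∞(n,ℂ) is conjugate to its linear part: if φ ∈ G_∞(n,ℂ) satisfies φ^s = id for some s ≥ 1, then there exists ϕ ∈ G_∞(n,ℂ) such that ϕ∘φ = φ₁∘ϕ, where φ₁ is regarded as the linear system of power series corresponding to the Jacobian matrix of φ. -/
noncomputable section

open MvPowerSeries

variable {n : ℕ} {K : Type} [Field K]

/-- Composition, one component at a time. -/
def cOne (f : MvPowerSeries (Fin n) K) (ψ : Sys n K) : MvPowerSeries (Fin n) K :=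
  fun e =>
    MvPowerSeries.coeff (R := K) e
      (MvPolynomial.eval₂ (MvPowerSeries.C (σ := Fin n) (R := K)) ψ
        (MvPowerSeries.trunc K
          (Finsupp.equivFunOnFinite.symm fun _ => (e.sum fun _ x => x) + 1) f))

/-- total degree of a monomial -/
def deg (e : Fin n →₀ ℕ) : ℕ := e.sum fun _ x => x

lemma deg_eq_degree (e : Fin n →₀ ℕ) : deg e = Finsupp.degree e := rfl

lemma deg_eq_zero_iff (e : Fin n →₀ ℕ) : deg e = 0 ↔ e = 0 := by
  rw [deg_eq_degree, Finsupp.degree_eq_zero_iff]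

lemma deg_add (a b : Fin n →₀ ℕ) : deg (a + b) = deg a + deg b :=
  Finsupp.sum_add_index' (fun _ => rfl) (fun _ _ _ => rfl)

lemma deg_single (j : Fin n) (k : ℕ) : deg (Finsupp.single j k) = k :=
  Finsupp.sum_single_index rfl

lemma le_deg (j : Fin n) (e : Fin n →₀ ℕ) : e j ≤ deg e := by
  rw [deg_eq_degree]; exact Finsupp.le_degree j e

lemma prodPow_add (ψ : Sys n K) (d₁ d₂ : Fin n →₀ ℕ) :
    (∏ j, ψ j ^ ((d₁ + d₂) j)) = (∏ j, ψ j ^ d₁ j) * ∏ j, ψ j ^ d₂ j := by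
  simp [Finsupp.add_apply, pow_add, Finset.prod_mul_distrib]

lemma prodPow_single (ψ : Sys n K) (a : Fin n) :
    (∏ j, ψ j ^ (Finsupp.single a 1) j) = ψ a := by
  rw [Finset.prod_eq_single a]
  · simp
  · intro b _ hb
    simp [Finsupp.single_apply, Ne.symm hb]
  · simp

/-- The order lemma: substituting series without constant term into a monomial of
degree `> deg e` kills the coefficient at `e`. -/
lemma coeff_prodPow_eq_zero (ψ : Sys n K)
    (hψ : ∀ j, MvPowerSeries.constantCoeff (σ := Fin n) (R := K) (ψ j) = 0) :
    ∀ (k : ℕ) (d e : Fin n →₀ ℕ), deg d = k → deg e < k →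
      MvPowerSeries.coeff (R := K) e (∏ j, ψ j ^ d j) = 0 := by
  intro k
  induction k with
  | zero => intro d e _ he; omega
  | succ k ih =>
    intro d e hd he
    have hd0 : d ≠ 0 := by
      rintro rfl
      rw [(deg_eq_zero_iff (0 : Fin n →₀ ℕ)).mpr rfl] at hd
      omega
    obtain ⟨a, ha⟩ : ∃ a, d a ≠ 0 := by
      by_contra h
      push_neg at h
      exact hd0 (Finsupp.ext fun j => h j)
    set d' : Fin n →₀ ℕ := d - Finsupp.single a 1 with hd'def
    have hds : d = Finsupp.single a 1 + d' := by
      ext j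
      simp only [hd'def, Finsupp.add_apply, Finsupp.tsub_apply, Finsupp.single_apply]
      by_cases h : a = j
      · subst h; rw [if_pos rfl]; omega
      · simp [h]
    have hdeg' : deg d' = k := by
      rw [hds, deg_add, deg_single] at hd
      omega
    rw [hds, prodPow_add, prodPow_single, MvPowerSeries.coeff_mul]
    apply Finset.sum_eq_zero
    rintro ⟨u, v⟩ huv
    have huve : u + v = e := Finset.HasAntidiagonal.mem_antidiagonal.mp huv
    by_cases hu : u = 0
    · rw [hu, MvPowerSeries.coeff_zero_eq_constantCoeff_apply, hψ a, zero_mul]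
    · have h1 : deg u ≠ 0 := fun h => hu ((deg_eq_zero_iff u).mp h)
      have h2 : deg u + deg v = deg e := by rw [← deg_add, huve]
      have : deg v < k := by omega
      rw [ih d' v hdeg' this, mul_zero]

lemma coeff_eval₂ (ψ : Sys n K) (P : MvPolynomial (Fin n) K) (e : Fin n →₀ ℕ) :
    MvPowerSeries.coeff (R := K) e (P.eval₂ (MvPowerSeries.C (σ := Fin n) (R := K)) ψ) =
      ∑ d ∈ P.support, P.coeff d * MvPowerSeries.coeff (R := K) e (∏ j, ψ j ^ d j) := by
  rw [MvPolynomial.eval₂_eq', map_sum]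
  exact Finset.sum_congr rfl fun d _ => MvPowerSeries.coeff_C_mul _ _ _

lemma coeff_eval₂_eq_zero (ψ : Sys n K)
    (hψ : ∀ j, MvPowerSeries.constantCoeff (σ := Fin n) (R := K) (ψ j) = 0)
    {m : ℕ} {P : MvPolynomial (Fin n) K} (h : ∀ d, deg d ≤ m → P.coeff d = 0)
    (e : Fin n →₀ ℕ) (he : deg e ≤ m) :
    MvPowerSeries.coeff (R := K) e (P.eval₂ (MvPowerSeries.C (σ := Fin n) (R := K)) ψ) = 0 := by
  rw [coeff_eval₂]
  apply Finset.sum_eq_zero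
  intro d hd
  by_cases hdm : deg d ≤ m
  · rw [h d hdm, zero_mul]
  · rw [coeff_prodPow_eq_zero ψ hψ (deg d) d e rfl (by omega), mul_zero]

lemma coeff_eval₂_congr (ψ : Sys n K)
    (hψ : ∀ j, MvPowerSeries.constantCoeff (σ := Fin n) (R := K) (ψ j) = 0)
    {m : ℕ} {P Q : MvPolynomial (Fin n) K} (h : ∀ d, deg d ≤ m → P.coeff d = Q.coeff d)
    (e : Fin n →₀ ℕ) (he : deg e ≤ m) :
    MvPowerSeries.coeff (R := K) e (P.eval₂ (MvPowerSeries.C (σ := Fin n) (R := K)) ψ) =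
      MvPowerSeries.coeff (R := K) e (Q.eval₂ (MvPowerSeries.C (σ := Fin n) (R := K)) ψ) := by
  have hsub : ∀ d, deg d ≤ m → (P - Q).coeff d = 0 := by
    intro d hd
    rw [MvPolynomial.coeff_sub, h d hd, sub_self]
  have := coeff_eval₂_eq_zero ψ hψ hsub e he
  rw [MvPolynomial.eval₂_sub, map_sub, sub_eq_zero] at this
  exact this

lemma coeff_cOne (f : MvPowerSeries (Fin n) K) (ψ : Sys n K) (e : Fin n →₀ ℕ) :
    MvPowerSeries.coeff (R := K) e (cOne f ψ) =
      MvPowerSeries.coeff (R := K) e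
        (MvPolynomial.eval₂ (MvPowerSeries.C (σ := Fin n) (R := K)) ψ
          (MvPowerSeries.trunc K
            (Finsupp.equivFunOnFinite.symm fun _ => deg e + 1) f)) := by
  rw [MvPowerSeries.coeff_apply]
  rfl

lemma lt_truncBound [NeZero n] (d e : Fin n →₀ ℕ) (h : deg d ≤ deg e) :
    d < Finsupp.equivFunOnFinite.symm (fun _ => deg e + 1) := by
  have happ : ∀ j : Fin n, (Finsupp.equivFunOnFinite.symm (fun _ => deg e + 1) : Fin n →₀ ℕ) j
      = deg e + 1 := fun j => rfl
  constructor
  · intro j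
    have := le_deg j d
    rw [happ j]
    omega
  · intro hle
    obtain ⟨j0⟩ : Nonempty (Fin n) := ⟨⟨0, Nat.pos_of_ne_zero (NeZero.ne n)⟩⟩
    have h1 := hle j0
    have h2 := le_deg j0 d
    rw [happ j0] at h1
    omega

/-- The master computation lemma: the coefficient of `cOne f ψ` can be computed with
any polynomial agreeing with `f` in low degrees. -/
lemma coeff_cOne_eq [NeZero n] (ψ : Sys n K)
    (hψ : ∀ j, MvPowerSeries.constantCoeff (σ := Fin n) (R := K) (ψ j) = 0)
    (f : MvPowerSeries (Fin n) K) (e : Fin n →₀ ℕ) (P : MvPolynomial (Fin n) K)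
    (hP : ∀ d, deg d ≤ deg e → P.coeff d = MvPowerSeries.coeff (R := K) d f) :
    MvPowerSeries.coeff (R := K) e (cOne f ψ) =
      MvPowerSeries.coeff (R := K) e (P.eval₂ (MvPowerSeries.C (σ := Fin n) (R := K)) ψ) := by
  rw [coeff_cOne]
  refine coeff_eval₂_congr ψ hψ (m := deg e) ?_ e le_rfl
  intro d hd
  rw [MvPowerSeries.coeff_trunc, if_pos (lt_truncBound d e hd), hP d hd]

lemma cOne_add (f g : MvPowerSeries (Fin n) K) (ψ : Sys n K) :
    cOne (f + g) ψ = cOne f ψ + cOne g ψ := by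
  ext e
  rw [map_add, coeff_cOne, coeff_cOne, coeff_cOne, map_add, MvPolynomial.eval₂_add, map_add]

lemma cOne_zero (ψ : Sys n K) : cOne (0 : MvPowerSeries (Fin n) K) ψ = 0 := by
  ext e
  rw [coeff_cOne, map_zero, MvPolynomial.eval₂_zero, map_zero]

lemma cOne_sum {α : Type} (t : Finset α) (f : α → MvPowerSeries (Fin n) K) (ψ : Sys n K) :
    cOne (∑ a ∈ t, f a) ψ = ∑ a ∈ t, cOne (f a) ψ := by
  induction t using Finset.cons_induction with
  | empty => simp [cOne_zero]
  | cons a t ha ih => rw [Finset.sum_cons, Finset.sum_cons, cOne_add, ih]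

lemma trunc_C_mul (N : Fin n →₀ ℕ) (c : K) (f : MvPowerSeries (Fin n) K) :
    MvPowerSeries.trunc K N (MvPowerSeries.C (σ := Fin n) (R := K) c * f) =
      MvPolynomial.C c * MvPowerSeries.trunc K N f := by
  apply MvPolynomial.ext
  intro d
  rw [MvPowerSeries.coeff_trunc, MvPolynomial.coeff_C_mul, MvPowerSeries.coeff_trunc,
    MvPowerSeries.coeff_C_mul]
  split_ifs <;> simp

lemma cOne_C_mul (c : K) (f : MvPowerSeries (Fin n) K) (ψ : Sys n K) :
    cOne (MvPowerSeries.C (σ := Fin n) (R := K) c * f) ψ = MvPowerSeries.C (σ := Fin n) (R := K) c * cOne f ψ := by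
  ext e
  rw [coeff_cOne, _root_.trunc_C_mul, MvPolynomial.eval₂_mul, MvPolynomial.eval₂_C,
    MvPowerSeries.coeff_C_mul, MvPowerSeries.coeff_C_mul, coeff_cOne]

lemma cOne_X [NeZero n] (ψ : Sys n K)
    (hψ : ∀ j, MvPowerSeries.constantCoeff (σ := Fin n) (R := K) (ψ j) = 0) (j : Fin n) :
    cOne (MvPowerSeries.X j) ψ = ψ j := by
  ext e
  by_cases h : deg e = 0
  · have he : e = 0 := (deg_eq_zero_iff e).mp h
    rw [coeff_cOne_eq ψ hψ _ e 0 ?_, MvPolynomial.eval₂_zero, map_zero, he,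
      MvPowerSeries.coeff_zero_eq_constantCoeff_apply, hψ j]
    intro d hd
    have hd0 : d = 0 := (deg_eq_zero_iff d).mp (by omega)
    rw [hd0, MvPolynomial.coeff_zero, MvPowerSeries.coeff_zero_eq_constantCoeff_apply,
      MvPowerSeries.constantCoeff_X]
  · rw [coeff_cOne_eq ψ hψ _ e (MvPolynomial.X j) ?_, MvPolynomial.eval₂_X]
    intro d _
    rw [MvPolynomial.coeff_X', MvPowerSeries.coeff_X]
    simp [eq_comm]

lemma constantCoeff_cOne [NeZero n] (ψ : Sys n K)
    (hψ : ∀ j, MvPowerSeries.constantCoeff (σ := Fin n) (R := K) (ψ j) = 0)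
    (f : MvPowerSeries (Fin n) K) :
    MvPowerSeries.constantCoeff (σ := Fin n) (R := K) (cOne f ψ) =
      MvPowerSeries.constantCoeff (σ := Fin n) (R := K) f := by
  have hP : ∀ d, deg d ≤ deg (0 : Fin n →₀ ℕ) →
      (MvPolynomial.C (MvPowerSeries.constantCoeff (σ := Fin n) (R := K) f) :
        MvPolynomial (Fin n) K).coeff d = MvPowerSeries.coeff (R := K) d f := by
    intro d hd
    have h0 : deg (0 : Fin n →₀ ℕ) = 0 := (deg_eq_zero_iff 0).mpr rfl
    have hd0 : d = 0 := (deg_eq_zero_iff d).mp (by omega)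
    rw [hd0, MvPolynomial.coeff_zero_C, MvPowerSeries.coeff_zero_eq_constantCoeff_apply]
  have h := coeff_cOne_eq ψ hψ f 0 _ hP
  rw [MvPolynomial.eval₂_C, MvPowerSeries.coeff_zero_eq_constantCoeff_apply,
    MvPowerSeries.coeff_zero_eq_constantCoeff_apply, MvPowerSeries.constantCoeff_C] at h
  exact h

lemma comp_apply_eq_cOne (φ ψ : Sys n K) (i : Fin n) : comp φ ψ i = cOne (φ i) ψ := rfl

/-- monomials of degree one -/
lemma deg_eq_one (d : Fin n →₀ ℕ) (hd : deg d = 1) : ∃ j, d = Finsupp.single j 1 := by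
  have hd0 : d ≠ 0 := by
    rintro rfl
    rw [(deg_eq_zero_iff (0 : Fin n →₀ ℕ)).mpr rfl] at hd
    omega
  obtain ⟨a, ha⟩ : ∃ a, d a ≠ 0 := by
    by_contra h
    push_neg at h
    exact hd0 (Finsupp.ext fun j => h j)
  refine ⟨a, Finsupp.ext fun j => ?_⟩
  rcases eq_or_ne a j with rfl | hne
  · have := le_deg a d
    rw [Finsupp.single_apply, if_pos rfl]
    omega
  · rw [Finsupp.single_apply, if_neg hne]
    have hdsum : deg d = ∑ x, d x := Finsupp.sum_fintype _ _ (fun _ => rfl)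
    have hpair : d a + d j ≤ ∑ x, d x := by
      rw [← Finset.sum_pair hne]
      exact Finset.sum_le_sum_of_subset (Finset.subset_univ _)
    omega

lemma comp_ofMatrix [NeZero n] (A : Matrix (Fin n) (Fin n) K) (ψ : Sys n K)
    (hψ : ∀ j, MvPowerSeries.constantCoeff (σ := Fin n) (R := K) (ψ j) = 0) :
    comp (ofMatrix A) ψ = fun i => ∑ j, MvPowerSeries.C (σ := Fin n) (R := K) (A i j) * ψ j := by
  funext i
  rw [comp_apply_eq_cOne]
  show cOne (∑ j, MvPowerSeries.C (σ := Fin n) (R := K) (A i j) * MvPowerSeries.X j) ψ = _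
  rw [cOne_sum]
  exact Finset.sum_congr rfl fun j _ => by rw [cOne_C_mul, cOne_X ψ hψ]

lemma constantCoeff_ofMatrix (A : Matrix (Fin n) (Fin n) K) (i : Fin n) :
    MvPowerSeries.constantCoeff (σ := Fin n) (R := K) (ofMatrix A i) = 0 := by
  rw [ofMatrix, map_sum]
  apply Finset.sum_eq_zero
  intro j _
  rw [map_mul, MvPowerSeries.constantCoeff_X, mul_zero]

lemma constantCoeff_idSys (i : Fin n) :
    MvPowerSeries.constantCoeff (σ := Fin n) (R := K) (idSys i) = 0 :=
  MvPowerSeries.constantCoeff_X i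

lemma constantCoeff_comp [NeZero n] (φ ψ : Sys n K)
    (hψ : ∀ j, MvPowerSeries.constantCoeff (σ := Fin n) (R := K) (ψ j) = 0) (i : Fin n) :
    MvPowerSeries.constantCoeff (σ := Fin n) (R := K) (comp φ ψ i) =
      MvPowerSeries.constantCoeff (σ := Fin n) (R := K) (φ i) := by
  rw [comp_apply_eq_cOne, constantCoeff_cOne ψ hψ]

lemma constantCoeff_iterComp [NeZero n] (φ : Sys n K)
    (hφ : ∀ j, MvPowerSeries.constantCoeff (σ := Fin n) (R := K) (φ j) = 0) (k : ℕ) (i : Fin n) :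
    MvPowerSeries.constantCoeff (σ := Fin n) (R := K) (iterComp φ k i) = 0 := by
  induction k with
  | zero => exact constantCoeff_idSys i
  | succ k ih => rw [iterComp, constantCoeff_comp _ _ hφ]; exact ih

lemma jac_idSys : jac (idSys : Sys n K) = 1 := by
  funext i j
  rw [jac, idSys, MvPowerSeries.coeff_X, Matrix.one_apply]
  simp [Finsupp.single_eq_single_iff, eq_comm]

lemma jac_ofMatrix (A : Matrix (Fin n) (Fin n) K) : jac (ofMatrix A) = A := by
  funext i j
  rw [jac, ofMatrix, map_sum]
  rw [Finset.sum_eq_single j]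
  · rw [MvPowerSeries.coeff_C_mul, MvPowerSeries.coeff_X, if_pos rfl, mul_one]
  · intro l _ hl
    rw [MvPowerSeries.coeff_C_mul, MvPowerSeries.coeff_X, if_neg, mul_zero]
    simp only [Finsupp.single_eq_single_iff, one_ne_zero, and_false, or_false, and_true]
    exact fun h => hl h.symm
  · intro h
    exact absurd (Finset.mem_univ j) h

lemma jac_comp [NeZero n] (φ ψ : Sys n K)
    (hψ : ∀ j, MvPowerSeries.constantCoeff (σ := Fin n) (R := K) (ψ j) = 0) :
    jac (comp φ ψ) = jac φ * jac ψ := by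
  funext i l
  show MvPowerSeries.coeff (R := K) (Finsupp.single l 1) (comp φ ψ i) = _
  rw [comp_apply_eq_cOne]
  set c0 : K := MvPowerSeries.constantCoeff (σ := Fin n) (R := K) (φ i) with hc0
  set P : MvPolynomial (Fin n) K :=
    MvPolynomial.C c0 + ∑ j, MvPolynomial.C (jac φ i j) * MvPolynomial.X j with hP
  have hdegl : deg (Finsupp.single l 1) = 1 := deg_single l 1
  rw [coeff_cOne_eq ψ hψ _ _ P ?_]
  · rw [hP, MvPolynomial.eval₂_add, MvPolynomial.eval₂_C, map_add, MvPowerSeries.coeff_C,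
      if_neg (by simp [Finsupp.single_eq_zero])]
    rw [zero_add]
    have : MvPolynomial.eval₂ (MvPowerSeries.C (σ := Fin n) (R := K)) ψ
        (∑ j, MvPolynomial.C (jac φ i j) * MvPolynomial.X j)
        = ∑ j, MvPowerSeries.C (σ := Fin n) (R := K) (jac φ i j) * ψ j := by
      rw [← MvPolynomial.coe_eval₂Hom, map_sum]
      exact Finset.sum_congr rfl fun j _ => by
        rw [map_mul, MvPolynomial.coe_eval₂Hom, MvPolynomial.eval₂_C, MvPolynomial.eval₂_X]
    rw [this, map_sum, Matrix.mul_apply]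
    exact Finset.sum_congr rfl fun j _ => by rw [MvPowerSeries.coeff_C_mul]; rfl
  · intro d hd
    rw [hdegl] at hd
    interval_cases h : deg d
    · have hd0 : d = 0 := (deg_eq_zero_iff d).mp h
      subst hd0
      rw [hP, MvPolynomial.coeff_add, MvPolynomial.coeff_zero_C, MvPolynomial.coeff_sum]
      rw [MvPowerSeries.coeff_zero_eq_constantCoeff_apply, ← hc0]
      rw [Finset.sum_eq_zero, add_zero]
      intro j _
      rw [MvPolynomial.coeff_C_mul, MvPolynomial.coeff_X', if_neg, mul_zero]
      simp [Finsupp.single_eq_zero, eq_comm]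
    · obtain ⟨j0, rfl⟩ := deg_eq_one d h
      rw [hP, MvPolynomial.coeff_add, MvPolynomial.coeff_C,
        if_neg (by simp [Finsupp.single_eq_zero, eq_comm]), zero_add, MvPolynomial.coeff_sum]
      rw [Finset.sum_eq_single j0]
      · rw [MvPolynomial.coeff_C_mul, MvPolynomial.coeff_X', if_pos rfl, mul_one]
        rfl
      · intro l' _ hl'
        rw [MvPolynomial.coeff_C_mul, MvPolynomial.coeff_X', if_neg, mul_zero]
        simp [Finsupp.single_eq_single_iff, hl']
      · intro h'; exact absurd (Finset.mem_univ j0) h'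

lemma jac_sum {α : Type} (t : Finset α) (σs : α → Sys n K) :
    jac (∑ a ∈ t, σs a) = ∑ a ∈ t, jac (σs a) := by
  funext i j
  show MvPowerSeries.coeff (R := K) _ ((∑ a ∈ t, σs a) i) = (∑ a ∈ t, jac (σs a)) i j
  rw [Finset.sum_apply, map_sum, Matrix.sum_apply]
  exact Finset.sum_congr rfl fun a _ => rfl

/-- Every periodic series in `G_∞(n,ℂ)` is conjugate to its linear part. -/
theorem periodic_complex_conjugate_to_linear_part
    (n : ℕ) (φ : Sys n ℂ) (hφ0 : homC 0 φ = 0) (hinv : IsUnit (jac φ).det)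
    (hper : ∃ s : ℕ, 1 ≤ s ∧ iterComp φ s = idSys) :
    ∃ ϕ : Sys n ℂ, homC 0 ϕ = 0 ∧ IsUnit (jac ϕ).det ∧
      comp ϕ φ = comp (ofMatrix (jac φ)) ϕ := by
  rcases Nat.eq_zero_or_pos n with hn | hn
  · subst hn
    exact ⟨idSys, funext fun i => i.elim0, by rw [jac_idSys]; simp,
      funext fun i => i.elim0⟩
  haveI : NeZero n := ⟨by omega⟩
  obtain ⟨s, hs1, hpers⟩ := hper
  have hZφ : ∀ i, MvPowerSeries.constantCoeff (σ := Fin n) (R := ℂ) (φ i) = 0 := by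
    intro i
    have h1 : homC 0 φ i = 0 := by rw [hφ0]; rfl
    have h2 := congrFun h1 (0 : Fin n →₀ ℕ)
    have h3 : ((0 : Fin n →₀ ℕ).sum fun _ x => x) = 0 := (deg_eq_zero_iff 0).mpr rfl
    simp only [homC, h3, if_true] at h2
    rw [← MvPowerSeries.coeff_zero_eq_constantCoeff_apply]
    exact h2
  set A := jac φ with hA
  have hjac_iter : ∀ k, jac (iterComp φ k) = A ^ k := by
    intro k
    induction k with
    | zero => rw [pow_zero]; exact jac_idSys
    | succ k ih =>
      show jac (comp (iterComp φ k) φ) = A ^ (k + 1)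
      rw [jac_comp _ _ hZφ, ih, pow_succ]
  have hAs : A ^ s = 1 := by rw [← hjac_iter s, hpers, jac_idSys]
  set B := A ^ (s - 1) with hB
  have hAB : A * B = 1 := by
    have h1 : s - 1 + 1 = s := by omega
    rw [hB, ← pow_succ', h1, hAs]
  have hABk : ∀ k, A * B ^ (k + 1) = B ^ k := by
    intro k
    rw [pow_succ' B k, ← mul_assoc, hAB, one_mul]
  have hBpow : B ^ s = 1 := by rw [hB, ← pow_mul, mul_comm, pow_mul, hAs, one_pow]
  have hBs : B ^ (s - 1) = A := by
    calc B ^ (s - 1) = (A * B) * B ^ (s - 1) := by rw [hAB, one_mul]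
      _ = A * B ^ (s - 1 + 1) := by rw [mul_assoc, ← pow_succ']
      _ = A * B ^ s := by rw [Nat.sub_add_cancel hs1]
      _ = A := by rw [hBpow, mul_one]
  have hBAk : ∀ k, B ^ k * A ^ k = 1 := by
    intro k
    have hcomm : Commute B A := (Commute.refl A).pow_left (s - 1)
    rw [← Commute.mul_pow hcomm, hcomm.eq, hAB, one_pow]
  have hZiter : ∀ k i, MvPowerSeries.constantCoeff (σ := Fin n) (R := ℂ) (iterComp φ k i) = 0 :=
    fun k i => constantCoeff_iterComp φ hZφ k i
  set Z : Sys n ℂ := ∑ k ∈ Finset.range s, comp (ofMatrix (B ^ k)) (iterComp φ k) with hZdef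
  have hZ0 : ∀ i, MvPowerSeries.constantCoeff (σ := Fin n) (R := ℂ) (Z i) = 0 := by
    intro i
    rw [hZdef, Finset.sum_apply, map_sum]
    apply Finset.sum_eq_zero
    intro k _
    rw [constantCoeff_comp _ _ (hZiter k), constantCoeff_ofMatrix]
  refine ⟨Z, ?_, ?_, ?_⟩
  · funext i
    funext e
    show (if (e.sum fun _ x => x) = 0 then MvPowerSeries.coeff (R := ℂ) e (Z i) else 0) = 0
    split_ifs with h
    · have he : e = 0 := (deg_eq_zero_iff e).mp h
      subst he
      rw [MvPowerSeries.coeff_zero_eq_constantCoeff_apply, hZ0 i]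
    · rfl
  · rw [hZdef, jac_sum]
    have hone : ∀ k ∈ Finset.range s, jac (comp (ofMatrix (B ^ k)) (iterComp φ k)) = 1 := by
      intro k _
      rw [jac_comp _ _ (hZiter k), jac_ofMatrix, hjac_iter, hBAk]
    rw [Finset.sum_congr rfl hone, Finset.sum_const, Finset.card_range,
      ← Nat.cast_smul_eq_nsmul ℂ, Matrix.det_smul, Matrix.det_one, mul_one]
    exact isUnit_iff_ne_zero.mpr (pow_ne_zero _ (Nat.cast_ne_zero.mpr (by omega)))
  · have hZi : ∀ j, Z j = ∑ k ∈ Finset.range s,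
        ∑ l, MvPowerSeries.C (σ := Fin n) (R := ℂ) ((B ^ k) j l) * iterComp φ k l := by
      intro j
      rw [hZdef, Finset.sum_apply]
      exact Finset.sum_congr rfl fun k _ => by rw [comp_ofMatrix _ _ (hZiter k)]
    have hcompZ : comp Z φ =
        ∑ k ∈ Finset.range s, comp (ofMatrix (B ^ k)) (iterComp φ (k + 1)) := by
      funext i
      rw [comp_apply_eq_cOne, hZi i, cOne_sum, Finset.sum_apply]
      apply Finset.sum_congr rfl
      intro k _
      rw [cOne_sum, comp_ofMatrix _ _ (hZiter (k + 1))]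
      apply Finset.sum_congr rfl
      intro j _
      rw [cOne_C_mul]
      congr 1
    have hcompA : comp (ofMatrix A) Z =
        ∑ k ∈ Finset.range s, comp (ofMatrix (A * B ^ k)) (iterComp φ k) := by
      rw [comp_ofMatrix _ _ hZ0]
      funext i
      show (∑ j, MvPowerSeries.C (σ := Fin n) (R := ℂ) (A i j) * Z j) = _
      rw [Finset.sum_apply]
      have key : ∀ k, (∑ j, MvPowerSeries.C (σ := Fin n) (R := ℂ) (A i j) *
          ∑ l, MvPowerSeries.C (σ := Fin n) (R := ℂ) ((B ^ k) j l) * iterComp φ k l) =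
          ∑ l, MvPowerSeries.C (σ := Fin n) (R := ℂ) ((A * B ^ k) i l) * iterComp φ k l := by
        intro k
        calc (∑ j, MvPowerSeries.C (σ := Fin n) (R := ℂ) (A i j) *
              ∑ l, MvPowerSeries.C (σ := Fin n) (R := ℂ) ((B ^ k) j l) * iterComp φ k l)
            = ∑ j, ∑ l, MvPowerSeries.C (σ := Fin n) (R := ℂ) (A i j) *
              (MvPowerSeries.C (σ := Fin n) (R := ℂ) ((B ^ k) j l) * iterComp φ k l) := by
              exact Finset.sum_congr rfl fun j _ => Finset.mul_sum _ _ _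
          _ = ∑ l, ∑ j, MvPowerSeries.C (σ := Fin n) (R := ℂ) (A i j) *
              (MvPowerSeries.C (σ := Fin n) (R := ℂ) ((B ^ k) j l) * iterComp φ k l) := Finset.sum_comm
          _ = ∑ l, (∑ j, MvPowerSeries.C (σ := Fin n) (R := ℂ) (A i j * (B ^ k) j l)) * iterComp φ k l := by
              apply Finset.sum_congr rfl
              intro l _
              rw [Finset.sum_mul]
              exact Finset.sum_congr rfl fun j _ => by rw [map_mul, mul_assoc]
          _ = ∑ l, MvPowerSeries.C (σ := Fin n) (R := ℂ) ((A * B ^ k) i l) * iterComp φ k l := by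
              apply Finset.sum_congr rfl
              intro l _
              rw [← map_sum, Matrix.mul_apply]
      calc (∑ j, MvPowerSeries.C (σ := Fin n) (R := ℂ) (A i j) * Z j)
          = ∑ j, ∑ k ∈ Finset.range s, MvPowerSeries.C (σ := Fin n) (R := ℂ) (A i j) *
            ∑ l, MvPowerSeries.C (σ := Fin n) (R := ℂ) ((B ^ k) j l) * iterComp φ k l := by
            apply Finset.sum_congr rfl
            intro j _
            rw [hZi j, Finset.mul_sum]
        _ = ∑ k ∈ Finset.range s, ∑ j, MvPowerSeries.C (σ := Fin n) (R := ℂ) (A i j) *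
            ∑ l, MvPowerSeries.C (σ := Fin n) (R := ℂ) ((B ^ k) j l) * iterComp φ k l := Finset.sum_comm
        _ = ∑ k ∈ Finset.range s, comp (ofMatrix (A * B ^ k)) (iterComp φ k) i := by
            apply Finset.sum_congr rfl
            intro k _
            rw [key k, comp_ofMatrix _ _ (hZiter k)]
    rw [hcompZ, hcompA]
    obtain ⟨t, rfl⟩ : ∃ t, s = t + 1 := ⟨s - 1, by omega⟩
    rw [Finset.sum_range_succ, Finset.sum_range_succ']
    have h2 : ∀ k ∈ Finset.range t, comp (ofMatrix (B ^ k)) (iterComp φ (k + 1)) =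
        comp (ofMatrix (A * B ^ (k + 1))) (iterComp φ (k + 1)) := fun k _ => by rw [hABk k]
    have h3 : comp (ofMatrix (B ^ t)) (iterComp φ (t + 1)) =
        comp (ofMatrix (A * B ^ 0)) (iterComp φ 0) := by
      have ht : t + 1 - 1 = t := by omega
      rw [hpers, pow_zero, mul_one, ← hBs, ht]
      rfl
    rw [Finset.sum_congr rfl h2, h3]
end
end

section
/- Let K be a field and let k, m be integers with k > m ≥ k/2 > 0 (equivalently 1 ≤ m < k ≤ 2m). Let φ, ψ be systems of formal power series with φ₀ = ψ₀ = 0, linear parts φ₁ = ψ₁ = id, and φ_i = ψ_i = 0 for all 2 ≤ i ≤ m. Then the compositions commute modulo degree k: (φ∘ψ)_{≤k} = (ψ∘φ)_{≤k}. (In other words, the subgroup G_{k,m} of the truncated transformation group G_k(n,K) is commutative.) -/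
noncomputable section

open MvPowerSeries

variable {n : ℕ} {K : Type} [Field K]

namespace GkmAux

/-- total degree of a monomial -/
def deg (e : Fin n →₀ ℕ) : ℕ := e.sum fun _ x => x

lemma deg_def (e : Fin n →₀ ℕ) : (e.sum fun _ x => x) = deg e := rfl

lemma deg_add (a b : Fin n →₀ ℕ) : deg (a + b) = deg a + deg b :=
  Finsupp.sum_add_index' (fun _ => rfl) (fun _ _ _ => rfl)

lemma deg_single (j : Fin n) (t : ℕ) : deg (Finsupp.single j t) = t := by
  simp [deg]

lemma deg_zero : deg (0 : Fin n →₀ ℕ) = 0 := by simp [deg]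

lemma apply_le_deg (e : Fin n →₀ ℕ) (j : Fin n) : e j ≤ deg e := by
  by_cases h : j ∈ e.support
  · exact Finset.single_le_sum (fun _ _ => Nat.zero_le _) h
  · simp [Finsupp.notMem_support_iff.mp h]

lemma eq_zero_of_deg_eq_zero {e : Fin n →₀ ℕ} (h : deg e = 0) : e = 0 := by
  ext j
  have := apply_le_deg e j
  simp only [Finsupp.coe_zero, Pi.zero_apply]
  omega

lemma eq_single_of_deg_eq_one {e : Fin n →₀ ℕ} (h : deg e = 1) :
    ∃ j, e = Finsupp.single j 1 := by
  have hne : e ≠ 0 := by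
    intro h0; rw [h0, deg_zero] at h; exact one_ne_zero h.symm
  obtain ⟨j, hj⟩ := Finsupp.ne_iff.mp hne
  have hj' : e j ≠ 0 := by simpa using hj
  have h1 : e j = 1 := by
    have := apply_le_deg e j; omega
  refine ⟨j, ?_⟩
  ext j'
  rcases eq_or_ne j' j with rfl | hne'
  · simp [h1]
  · rw [Finsupp.single_apply, if_neg (fun hh => hne' hh.symm)]
    by_contra hc
    have hsub : ({j, j'} : Finset (Fin n)) ⊆ e.support := by
      intro x hx
      simp only [Finset.mem_insert, Finset.mem_singleton] at hx
      rcases hx with rfl | rfl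
      · exact Finsupp.mem_support_iff.mpr hj'
      · exact Finsupp.mem_support_iff.mpr hc
    have hle : ∑ x ∈ ({j, j'} : Finset (Fin n)), e x ≤ ∑ x ∈ e.support, e x :=
      Finset.sum_le_sum_of_subset hsub
    rw [Finset.sum_pair (Ne.symm hne')] at hle
    have hdeg : deg e = ∑ x ∈ e.support, e x := rfl
    omega

/-- `p` has order `≥ q` (all coefficients of total degree `< q` vanish). -/
def OrdGE (p : MvPowerSeries (Fin n) K) (q : ℕ) : Prop :=
  ∀ e : Fin n →₀ ℕ, deg e < q → MvPowerSeries.coeff (R := K) e p = 0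

lemma OrdGE.mono {p : MvPowerSeries (Fin n) K} {q q' : ℕ} (h : OrdGE p q) (hq : q' ≤ q) :
    OrdGE p q' := fun e he => h e (lt_of_lt_of_le he hq)

lemma ordGE_zero (q : ℕ) : OrdGE (0 : MvPowerSeries (Fin n) K) q := fun _ _ => map_zero _

lemma OrdGE.add {p1 p2 : MvPowerSeries (Fin n) K} {q : ℕ}
    (h1 : OrdGE p1 q) (h2 : OrdGE p2 q) : OrdGE (p1 + p2) q := by
  intro e he; rw [map_add, h1 e he, h2 e he, add_zero]

lemma OrdGE.mul {p1 p2 : MvPowerSeries (Fin n) K} {q1 q2 : ℕ}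
    (h1 : OrdGE p1 q1) (h2 : OrdGE p2 q2) : OrdGE (p1 * p2) (q1 + q2) := by
  intro e he
  rw [MvPowerSeries.coeff_mul]
  apply Finset.sum_eq_zero
  intro uv huv
  have hsum : uv.1 + uv.2 = e := Finset.HasAntidiagonal.mem_antidiagonal.mp huv
  have hdeg : deg uv.1 + deg uv.2 < q1 + q2 := by rw [← deg_add, hsum]; exact he
  rcases lt_or_ge (deg uv.1) q1 with h | h
  · rw [h1 _ h, zero_mul]
  · rw [h2 _ (by omega), mul_zero]

lemma OrdGE.pow {p : MvPowerSeries (Fin n) K} (h : OrdGE p 1) (t : ℕ) :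
    OrdGE (p ^ t) t := by
  induction t with
  | zero => exact fun e he => absurd he (by simp)
  | succ t ih =>
      rw [pow_succ]
      exact (ih.mul h).mono (by omega)

lemma ordGE_prod {f : Fin n → MvPowerSeries (Fin n) K} {q : Fin n → ℕ} (s : Finset (Fin n))
    (h : ∀ j ∈ s, OrdGE (f j) (q j)) : OrdGE (∏ j ∈ s, f j) (∑ j ∈ s, q j) := by
  induction s using Finset.induction_on with
  | empty => exact fun e he => absurd he (by simp)
  | @insert a s ha ih =>
      rw [Finset.prod_insert ha, Finset.sum_insert ha]
      exact (h a (Finset.mem_insert_self a s)).mul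
        (ih fun j hj => h j (Finset.mem_insert_of_mem hj))

lemma ordGE_X (j : Fin n) : OrdGE (MvPowerSeries.X j : MvPowerSeries (Fin n) K) 1 := by
  intro e he
  have : e = 0 := eq_zero_of_deg_eq_zero (by omega)
  rw [this, MvPowerSeries.coeff_zero_X]

/-- hypothesis bundle: `ψ` agrees with the identity in all degrees `≤ m`. -/
def Good (m : ℕ) (ψ : Sys n K) : Prop :=
  ∀ j (e : Fin n →₀ ℕ), deg e ≤ m →
    MvPowerSeries.coeff (R := K) e (ψ j) = MvPowerSeries.coeff (R := K) e (MvPowerSeries.X j)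

lemma ordGE_sub_X {m : ℕ} {ψ : Sys n K} (hg : Good m ψ) (j : Fin n) :
    OrdGE (ψ j - MvPowerSeries.X j) (m + 1) := by
  intro e he
  rw [map_sub, hg j e (by omega), sub_self]

lemma ordGE_good {m : ℕ} {ψ : Sys n K} (hg : Good m ψ) (j : Fin n) : OrdGE (ψ j) 1 := by
  have : ψ j = (ψ j - MvPowerSeries.X j) + MvPowerSeries.X j := by ring
  rw [this]
  exact ((ordGE_sub_X hg j).mono (by omega)).add (ordGE_X j)

lemma prod_X_pow (d : Fin n →₀ ℕ) :
    (∏ j ∈ d.support, (MvPowerSeries.X j : MvPowerSeries (Fin n) K) ^ d j)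
      = MvPowerSeries.monomial (R := K) d 1 := by
  have key : ∀ s : Finset (Fin n), (∏ j ∈ s, (MvPowerSeries.X j : MvPowerSeries (Fin n) K) ^ d j)
      = MvPowerSeries.monomial (R := K) (∑ j ∈ s, Finsupp.single j (d j)) 1 := by
    intro s
    induction s using Finset.induction_on with
    | empty => simp [MvPowerSeries.monomial_zero_one]
    | @insert a s ha ih =>
        rw [Finset.prod_insert ha, Finset.sum_insert ha, MvPowerSeries.X_pow_eq, ih,
          MvPowerSeries.monomial_mul_monomial, one_mul]
  rw [key]
  exact congrArg (fun x => MvPowerSeries.monomial (R := K) x (1 : K)) (Finsupp.sum_single d)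

lemma coeff_prod_pow {m : ℕ} {ψ : Sys n K} (hg : Good m ψ)
    (d e : Fin n →₀ ℕ) (hd : m + 1 ≤ deg d) (he : deg e ≤ 2 * m) :
    MvPowerSeries.coeff (R := K) e (∏ j ∈ d.support, ψ j ^ d j) = if e = d then 1 else 0 := by
  have hdiffpow : ∀ (j : Fin n) (t : ℕ),
      OrdGE (ψ j ^ t - MvPowerSeries.X j ^ t) (t + m) := by
    intro j t
    induction t with
    | zero => simpa using ordGE_zero (K := K) (n := n) m
    | succ t ih =>
        have hexp : ψ j ^ (t + 1) - MvPowerSeries.X j ^ (t + 1)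
            = ψ j * (ψ j ^ t - MvPowerSeries.X j ^ t)
              + (ψ j - MvPowerSeries.X j) * MvPowerSeries.X j ^ t := by ring
        rw [hexp]
        refine OrdGE.add ?_ ?_
        · exact ((ordGE_good hg j).mul ih).mono (by omega)
        · exact ((ordGE_sub_X hg j).mul ((ordGE_X j).pow t)).mono (by omega)
  have hmain : ∀ s : Finset (Fin n),
      OrdGE ((∏ j ∈ s, ψ j ^ d j) - ∏ j ∈ s, (MvPowerSeries.X j : MvPowerSeries (Fin n) K) ^ d j)
        ((∑ j ∈ s, d j) + m) := by
    intro s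
    induction s using Finset.induction_on with
    | empty => simpa using ordGE_zero (K := K) (n := n) m
    | @insert a s ha ih =>
        rw [Finset.prod_insert ha, Finset.prod_insert ha, Finset.sum_insert ha]
        have hexp : ψ a ^ d a * ∏ j ∈ s, ψ j ^ d j
            - MvPowerSeries.X a ^ d a * ∏ j ∈ s, (MvPowerSeries.X j : MvPowerSeries (Fin n) K) ^ d j
            = ψ a ^ d a * ((∏ j ∈ s, ψ j ^ d j) - ∏ j ∈ s, (MvPowerSeries.X j : MvPowerSeries (Fin n) K) ^ d j)
              + (ψ a ^ d a - MvPowerSeries.X a ^ d a)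
                * ∏ j ∈ s, (MvPowerSeries.X j : MvPowerSeries (Fin n) K) ^ d j := by ring
        rw [hexp]
        refine OrdGE.add ?_ ?_
        · exact (((ordGE_good hg a).pow (d a)).mul ih).mono (by omega)
        · exact ((hdiffpow a (d a)).mul
            (ordGE_prod s fun j _ => (ordGE_X j).pow (d j))).mono (by omega)
  have hdegd : deg d = ∑ j ∈ d.support, d j := rfl
  have hzero : MvPowerSeries.coeff (R := K) e
      ((∏ j ∈ d.support, ψ j ^ d j)
        - ∏ j ∈ d.support, (MvPowerSeries.X j : MvPowerSeries (Fin n) K) ^ d j) = 0 :=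
    hmain d.support e (by omega)
  rw [map_sub, sub_eq_zero] at hzero
  rw [hzero, prod_X_pow, MvPowerSeries.coeff_monomial]

end GkmAux

namespace GkmAux

lemma homC_coeff (t : ℕ) (ψ : Sys n K) (j : Fin n) (e : Fin n →₀ ℕ) :
    MvPowerSeries.coeff (R := K) e (homC t ψ j)
      = if deg e = t then MvPowerSeries.coeff (R := K) e (ψ j) else 0 := rfl

lemma good_of {m : ℕ} {ψ : Sys n K}
    (h0 : homC 0 ψ = 0) (h1 : homC 1 ψ = idSys)
    (hh : ∀ i : ℕ, 2 ≤ i → i ≤ m → homC i ψ = 0) : Good m ψ := by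
  intro j e he
  rcases Nat.lt_or_ge (deg e) 2 with hlow | hhigh
  · by_cases h00 : deg e = 0
    · have h0' := congrArg (MvPowerSeries.coeff (R := K) e) (congrFun h0 j)
      rw [homC_coeff, if_pos h00] at h0'
      rw [h0']
      have he0 : e = 0 := eq_zero_of_deg_eq_zero h00
      rw [he0, MvPowerSeries.coeff_zero_X]
      simp
    · have h11 : deg e = 1 := by omega
      have h1' := congrArg (MvPowerSeries.coeff (R := K) e) (congrFun h1 j)
      rw [homC_coeff, if_pos h11] at h1'
      rw [h1']
      rfl
  · have hh' := congrArg (MvPowerSeries.coeff (R := K) e) (congrFun (hh (deg e) hhigh he) j)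
    rw [homC_coeff, if_pos rfl] at hh'
    rw [hh', MvPowerSeries.coeff_X,
      if_neg (fun hc => by rw [hc, deg_single] at hhigh; omega)]
    simp

lemma key {k m : ℕ} (h1 : 1 ≤ m) (h3 : k ≤ 2 * m)
    (φ ψ : Sys n K) (hφg : Good m φ) (hψg : Good m ψ)
    (i : Fin n) (e : Fin n →₀ ℕ) (he : deg e ≤ k) :
    MvPowerSeries.coeff (R := K) e (comp φ ψ i) =
      MvPowerSeries.coeff (R := K) e (ψ i)
        + (if m < deg e then MvPowerSeries.coeff (R := K) e (φ i) else 0) := by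
  classical
  set N : Fin n →₀ ℕ := Finsupp.equivFunOnFinite.symm fun _ => (e.sum fun _ x => x) + 1 with hN
  have hNj : ∀ j : Fin n, N j = deg e + 1 := fun j => rfl
  have heN : e < N := lt_iff_le_and_ne.mpr
    ⟨Finsupp.le_def.mpr fun j => by rw [hNj]; have := apply_le_deg e j; omega,
     fun hEq => by
       have h' := DFunLike.congr_fun hEq i
       rw [hNj] at h'
       have := apply_le_deg e i
       omega⟩
  have hcoeff : MvPowerSeries.coeff (R := K) e (comp φ ψ i)
      = ∑ d ∈ (MvPowerSeries.trunc K N (φ i)).support,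
          (MvPowerSeries.trunc K N (φ i)).coeff d
            * MvPowerSeries.coeff (R := K) e (∏ j ∈ d.support, ψ j ^ d j) := by
    rw [MvPowerSeries.coeff_apply]
    simp only [comp]
    rw [← hN, MvPolynomial.eval₂_eq, map_sum]
    simp only [MvPowerSeries.coeff_C_mul]
  rw [hcoeff]
  have hpt : ∀ d ∈ (MvPowerSeries.trunc K N (φ i)).support,
      (MvPowerSeries.trunc K N (φ i)).coeff d
          * MvPowerSeries.coeff (R := K) e (∏ j ∈ d.support, ψ j ^ d j)
        = (if d = Finsupp.single i 1 then MvPowerSeries.coeff (R := K) e (ψ i) else 0)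
          + (if d = e then (if m < deg e then MvPowerSeries.coeff (R := K) e (φ i) else 0) else 0) := by
    intro d _
    rw [MvPowerSeries.coeff_trunc]
    by_cases hdhi : m + 1 ≤ deg d
    · rw [coeff_prod_pow hψg d e hdhi (by omega)]
      by_cases hde : e = d
      · subst hde
        have hm' : m < deg e := by omega
        have hns : e ≠ Finsupp.single i 1 := fun hc => by
          rw [hc, deg_single] at hdhi; omega
        simp [if_pos heN, hm', hns]
      · rw [if_neg hde, mul_zero,
          if_neg (fun hc => by rw [hc, deg_single] at hdhi; omega),
          if_neg (fun hc => hde hc.symm), add_zero]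
    · push_neg at hdhi
      rcases Nat.lt_or_ge (deg d) 2 with hlow | hmid
      · by_cases hd0 : deg d = 0
        · have hd0' : d = 0 := eq_zero_of_deg_eq_zero hd0
          subst hd0'
          have hc0 : MvPowerSeries.coeff (R := K) 0 (φ i) = 0 := by
            rw [hφg i 0 (by rw [deg_zero]; omega), MvPowerSeries.coeff_zero_X]
          rw [hc0, ite_self, zero_mul,
            if_neg (fun h => one_ne_zero (Finsupp.single_eq_zero.mp h.symm))]
          rw [zero_add]
          split_ifs with h h'
          · exfalso; rw [← h, deg_zero] at h'; omega
          · rfl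
          · rfl
        · have hd1 : deg d = 1 := by omega
          obtain ⟨j, rfl⟩ := eq_single_of_deg_eq_one hd1
          have hsupp : (Finsupp.single j 1).support = {j} :=
            Finsupp.support_single_ne_zero j one_ne_zero
          rw [hsupp, Finset.prod_singleton, Finsupp.single_eq_same, pow_one]
          have hcd : MvPowerSeries.coeff (R := K) (Finsupp.single j 1) (φ i)
              = if Finsupp.single j 1 = Finsupp.single i 1 then 1 else 0 := by
            rw [hφg i _ (by rw [deg_single]; omega), MvPowerSeries.coeff_X]
          have hr2 : (if Finsupp.single j 1 = e
              then (if m < deg e then MvPowerSeries.coeff (R := K) e (φ i) else 0) else 0) = 0 := by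
            split_ifs with h h'
            · exfalso; rw [← h, deg_single] at h'; omega
            · rfl
            · rfl
          rw [hr2, add_zero]
          by_cases hji : j = i
          · subst hji
            rw [hcd, if_pos rfl, if_pos rfl]
            by_cases hlt : Finsupp.single j 1 < N
            · rw [if_pos hlt, one_mul]
            · rw [if_neg hlt, zero_mul]
              have hle : Finsupp.single j 1 ≤ N := Finsupp.le_def.mpr fun j' => by
                rw [hNj, Finsupp.single_apply]
                split_ifs <;> omega
              have heq : Finsupp.single j 1 = N := by
                by_contra hne
                exact hlt (lt_iff_le_and_ne.mpr ⟨hle, hne⟩)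
              have h1' : (1 : ℕ) = deg e + 1 := by
                have h' := DFunLike.congr_fun heq j
                rwa [Finsupp.single_eq_same, hNj] at h'
              have he0 : e = 0 := eq_zero_of_deg_eq_zero (by omega)
              rw [he0, hψg j 0 (by rw [deg_zero]; omega), MvPowerSeries.coeff_zero_X]
          · have hne : Finsupp.single j 1 ≠ Finsupp.single i 1 :=
              fun h => hji (Finsupp.single_left_injective one_ne_zero h)
            rw [hcd, if_neg hne, ite_self, zero_mul, if_neg hne]
      · have hcd0 : MvPowerSeries.coeff (R := K) d (φ i) = 0 := by
          rw [hφg i d (by omega), MvPowerSeries.coeff_X,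
            if_neg (fun hc => by rw [hc, deg_single] at hmid; omega)]
        rw [hcd0, ite_self, zero_mul,
          if_neg (fun hc => by rw [hc, deg_single] at hmid; omega), zero_add]
        split_ifs with h h'
        · exfalso; rw [← h] at h'; omega
        · rfl
        · rfl
  rw [Finset.sum_congr rfl hpt, Finset.sum_add_distrib,
    Finset.sum_ite_eq' _ (Finsupp.single i 1) (fun _ => MvPowerSeries.coeff (R := K) e (ψ i)),
    Finset.sum_ite_eq' _ e
      (fun _ => if m < deg e then MvPowerSeries.coeff (R := K) e (φ i) else 0)]
  congr 1
  · split_ifs with hmem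
    · rfl
    · -- `single i 1` not in the support forces `e = 0`
      have h0 : (MvPowerSeries.trunc K N (φ i)).coeff (Finsupp.single i 1) = 0 :=
        MvPolynomial.notMem_support_iff.mp hmem
      rw [MvPowerSeries.coeff_trunc] at h0
      have hc1 : MvPowerSeries.coeff (R := K) (Finsupp.single i 1) (φ i) = 1 := by
        rw [hφg i _ (by rw [deg_single]; omega), MvPowerSeries.coeff_X, if_pos rfl]
      by_cases hlt : Finsupp.single i 1 < N
      · rw [if_pos hlt, hc1] at h0
        exact absurd h0 one_ne_zero
      · have hle : Finsupp.single i 1 ≤ N := Finsupp.le_def.mpr fun j' => by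
          rw [hNj, Finsupp.single_apply]
          split_ifs <;> omega
        have heq : Finsupp.single i 1 = N := by
          by_contra hne
          exact hlt (lt_iff_le_and_ne.mpr ⟨hle, hne⟩)
        have h1' : (1 : ℕ) = deg e + 1 := by
          have h' := DFunLike.congr_fun heq i
          rwa [Finsupp.single_eq_same, hNj] at h'
        have he0 : e = 0 := eq_zero_of_deg_eq_zero (by omega)
        rw [he0, hψg i 0 (by rw [deg_zero]; omega), MvPowerSeries.coeff_zero_X]
  · split_ifs with hmem hm hm
    · rfl
    · rfl
    · -- `e` not in support forces its `φ` coefficient to vanish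
      have h0 : (MvPowerSeries.trunc K N (φ i)).coeff e = 0 :=
        MvPolynomial.notMem_support_iff.mp hmem
      rw [MvPowerSeries.coeff_trunc, if_pos heN] at h0
      rw [h0]
    · rfl

end GkmAux


/-- Let `1 ≤ m < k ≤ 2m`.  If `φ, ψ` have zero constant term, linear part
the identity and vanishing homogeneous components in all degrees `2 ≤ i ≤ m`, then
`(φ∘ψ)_{≤k} = (ψ∘φ)_{≤k}`; i.e. the subgroup `G_{k,m}` of `G_k(n,K)` is commutative. -/
theorem subgroup_Gkm_commutative
    (n : ℕ) (K : Type) [Field K] (k m : ℕ)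
    (h1 : 1 ≤ m) (h2 : m < k) (h3 : k ≤ 2 * m)
    (φ ψ : Sys n K)
    (hφ0 : homC 0 φ = 0) (hψ0 : homC 0 ψ = 0)
    (hφ1 : homC 1 φ = idSys) (hψ1 : homC 1 ψ = idSys)
    (hφ : ∀ i : ℕ, 2 ≤ i → i ≤ m → homC i φ = 0)
    (hψ : ∀ i : ℕ, 2 ≤ i → i ≤ m → homC i ψ = 0) :
    truncLE k (comp φ ψ) = truncLE k (comp ψ φ) := by
  have hφg : GkmAux.Good m φ := GkmAux.good_of hφ0 hφ1 hφ
  have hψg : GkmAux.Good m ψ := GkmAux.good_of hψ0 hψ1 hψ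
  funext i
  apply MvPowerSeries.ext
  intro e
  rw [MvPowerSeries.coeff_apply, MvPowerSeries.coeff_apply]
  simp only [truncLE]
  rw [GkmAux.deg_def]
  by_cases h : GkmAux.deg e ≤ k
  · rw [if_pos h, if_pos h,
      GkmAux.key h1 h3 φ ψ hφg hψg i e h, GkmAux.key h1 h3 ψ φ hψg hφg i e h]
    by_cases hm : m < GkmAux.deg e
    · rw [if_pos hm, if_pos hm]; ring
    · rw [if_neg hm, if_neg hm, add_zero, add_zero, hφg i e (by omega), hψg i e (by omega)]
  · rw [if_neg h, if_neg h]
end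
end
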